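/- For every positive integer n, the maximum number of triples in a triple system on n vertices that is both C-free and D-free equals ⌊(n−1)²/4⌋; that is, ex(n, CD) = ⌊(n−1)²/4⌋. -/

import Mathlib

/-- A triple system: a family of 3-element subsets of the vertex type. -/
def isTripleSystem {V : Type*} (F : Finset (Finset V)) : Prop :=
  ∀ t ∈ F, t.card = 3

/-- `F` contains the configuration described by `pattern` (a list of triples on `Fin m`)
if there is an injection of `Fin m` into the vertex set mapping each triple of the
pattern to a member of `F`. -/
def containsConfig {V : Type*} [DecidableEq V] {m : ℕ}
    (F : Finset (Finset V)) (pattern : List (Finset (Fin m))) : Prop :=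
  ∃ f : Fin m → V, Function.Injective f ∧ ∀ t ∈ pattern, t.image f ∈ F

/-- Configuration A: triples {1,2,4},{1,3,5},{2,3,6} on 6 vertices (0-indexed). -/
def configA : List (Finset (Fin 6)) := [{0,1,3}, {0,2,4}, {1,2,5}]

/-- Configuration B: triples {1,2,5},{1,3,4},{2,3,4} on 5 vertices (0-indexed). -/
def configB : List (Finset (Fin 5)) := [{0,1,4}, {0,2,3}, {1,2,3}]

/-- Configuration C: triples {1,2,4},{1,3,4},{2,3,4} on 4 vertices (0-indexed). -/
def configC : List (Finset (Fin 4)) := [{0,1,3}, {0,2,3}, {1,2,3}]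

/-- Configuration D: triples {1,2,3},{1,3,4},{2,3,5} on 5 vertices (0-indexed). -/
def configD : List (Finset (Fin 5)) := [{0,1,2}, {0,2,3}, {1,2,4}]



open Finset

namespace ExCDProof

/-- index set of the construction: pairs (a,c) with a even, a+1 < c < n. -/
def idx (n : ℕ) : Finset (ℕ × ℕ) :=
  (Finset.range n ×ˢ Finset.range n).filter fun p => p.1 % 2 = 0 ∧ p.1 + 1 < p.2

lemma mem_idx {n : ℕ} {p : ℕ × ℕ} :
    p ∈ idx n ↔ p.1 % 2 = 0 ∧ p.1 + 1 < p.2 ∧ p.2 < n := by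
  simp [idx, mem_filter, mem_product]
  omega

lemma card_filter_even (m : ℕ) :
    ((Finset.range m).filter fun a => a % 2 = 0).card = (m + 1) / 2 := by
  induction m with
  | zero => simp
  | succ m ih =>
    rw [Finset.range_add_one, Finset.filter_insert]
    by_cases h : m % 2 = 0
    · rw [if_pos h, Finset.card_insert_of_notMem (by simp)]
      omega
    · rw [if_neg h]
      omega

lemma card_idx (n : ℕ) : (idx n).card = (n - 1) ^ 2 / 4 := by
  induction n with
  | zero => simp [idx]
  | succ n ih =>
    have hsplit : idx (n + 1) =
        idx n ∪ ((Finset.range n).filter fun a => a % 2 = 0 ∧ a + 1 < n).image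
          (fun a => (a, n)) := by
      ext ⟨a, c⟩
      simp only [mem_idx, Finset.mem_union, Finset.mem_image, Finset.mem_filter,
        Finset.mem_range, Prod.mk.injEq]
      constructor
      · rintro ⟨h1, h2, h3⟩
        by_cases hc : c < n
        · exact Or.inl ⟨h1, h2, hc⟩
        · right; exact ⟨a, ⟨by omega, h1, by omega⟩, rfl, by omega⟩
      · rintro (⟨h1, h2, h3⟩ | ⟨b, ⟨hb1, hb2, hb3⟩, rfl, rfl⟩)
        · exact ⟨h1, h2, by omega⟩
        · exact ⟨hb2, by omega, by omega⟩
    have hdisj : Disjoint (idx n)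
        (((Finset.range n).filter fun a => a % 2 = 0 ∧ a + 1 < n).image (fun a => (a, n))) := by
      rw [Finset.disjoint_left]
      rintro ⟨a, c⟩ h1 h2
      simp only [Finset.mem_image, Finset.mem_filter, Prod.mk.injEq] at h2
      obtain ⟨b, _, _, rfl⟩ := h2
      exact absurd (mem_idx.mp h1).2.2 (by omega)
    have hinj : (((Finset.range n).filter fun a => a % 2 = 0 ∧ a + 1 < n).image
        (fun a => (a, n))).card = ((Finset.range n).filter fun a => a % 2 = 0 ∧ a + 1 < n).card :=
      Finset.card_image_of_injective _ (fun x y h => (Prod.mk.injEq _ _ _ _ ▸ h).1)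
    have hfe : ((Finset.range n).filter fun a => a % 2 = 0 ∧ a + 1 < n)
        = ((Finset.range (n-1)).filter fun a => a % 2 = 0) := by
      ext a
      simp only [Finset.mem_filter, Finset.mem_range]
      omega
    rw [hsplit, Finset.card_union_of_disjoint hdisj, ih, hinj, hfe, card_filter_even]
    have harith : ∀ m : ℕ, (m - 1) ^ 2 / 4 + (m - 1 + 1) / 2 = m ^ 2 / 4 := by
      intro m
      match m with
      | 0 => simp
      | k + 1 =>
        simp only [Nat.add_sub_cancel]
        rcases Nat.even_or_odd k with ⟨t, rfl⟩ | ⟨t, rfl⟩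
        · have e0 : t + t = 2 * t := by omega
          rw [e0]
          have e1 : (2*t)^2 = 4*(t*t) := by ring
          have e2 : (2*t+1)^2 = 4*(t*t) + 4*t + 1 := by ring
          omega
        · have e1 : (2*t+1)^2 = 4*(t*t)+4*t+1 := by ring
          have e2 : (2*t+1+1)^2 = 4*(t*t + 2*t + 1) := by ring
          omega
    have := harith n
    simpa using this


/-! ### The construction -/

variable {n : ℕ}

/-- embed a natural number in `Fin n` (assuming `0 < n`). -/
def g (hn : 0 < n) (a : ℕ) : Fin n := ⟨a % n, Nat.mod_lt _ hn⟩

lemma g_val (hn : 0 < n) {a : ℕ} (ha : a < n) : (g hn a).val = a := Nat.mod_eq_of_lt ha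

/-- the extremal construction: triples {a, a+1, c} with a even, a+1 < c < n. -/
def FF (hn : 0 < n) : Finset (Finset (Fin n)) :=
  (idx n).image fun p => {g hn p.1, g hn (p.1 + 1), g hn p.2}

lemma mem_triple_iff (hn : 0 < n) {a c : ℕ} (h1 : a + 1 < c) (h2 : c < n) (z : Fin n) :
    z ∈ ({g hn a, g hn (a + 1), g hn c} : Finset (Fin n)) ↔
      (z.val = a ∨ z.val = a + 1 ∨ z.val = c) := by
  have ha : a < n := by omega
  have ha1 : a + 1 < n := by omega
  simp only [Finset.mem_insert, Finset.mem_singleton, Fin.ext_iff,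
    g_val hn ha, g_val hn ha1, g_val hn h2]

lemma card_FF (hn : 0 < n) : (FF hn).card = (n - 1) ^ 2 / 4 := by
  rw [FF, Finset.card_image_of_injOn, card_idx]
  rintro ⟨a, c⟩ hac ⟨a', c'⟩ hac' heq
  rw [Finset.mem_coe, mem_idx] at hac hac'
  obtain ⟨he, h1, h2⟩ := hac
  obtain ⟨he', h1', h2'⟩ := hac'
  simp only at heq h1 h2 h1' h2' he he' ⊢
  have k1 : ∀ z : Fin n, (z.val = a ∨ z.val = a + 1 ∨ z.val = c) ↔
      (z.val = a' ∨ z.val = a' + 1 ∨ z.val = c') := by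
    intro z
    rw [← mem_triple_iff hn h1 h2, ← mem_triple_iff hn h1' h2', heq]
  have q1 := (k1 (g hn a)).mp (by left; exact g_val hn (by omega))
  have q2 := (k1 (g hn (a+1))).mp (by right; left; exact g_val hn (by omega))
  have q3 := (k1 (g hn c)).mp (by right; right; exact g_val hn h2)
  rw [g_val hn (by omega)] at q1
  rw [g_val hn (by omega)] at q2
  rw [g_val hn h2] at q3
  have : a = a' ∧ c = c' := by omega
  exact Prod.ext this.1 this.2

lemma card_triple (hn : 0 < n) {a c : ℕ} (h1 : a + 1 < c) (h2 : c < n) :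
    ({g hn a, g hn (a + 1), g hn c} : Finset (Fin n)).card = 3 := by
  rw [Finset.card_insert_of_notMem, Finset.card_insert_of_notMem, Finset.card_singleton]
  · simp only [Finset.mem_singleton, Fin.ext_iff, g_val hn (by omega : a + 1 < n), g_val hn h2]
    omega
  · simp only [Finset.mem_insert, Finset.mem_singleton, Fin.ext_iff,
      g_val hn (by omega : a < n), g_val hn (by omega : a + 1 < n), g_val hn h2]
    omega

lemma FF_triples (hn : 0 < n) : isTripleSystem (FF hn) := by
  intro T hT
  obtain ⟨⟨a, c⟩, hac, rfl⟩ := Finset.mem_image.mp hT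
  rw [mem_idx] at hac
  exact card_triple hn hac.2.1 hac.2.2

/-- key structural lemma: two elements shared by two distinct members of FF must
be the "core" {a, a+1} of each. -/
lemma FF_shared (hn : 0 < n) {T : Finset (Fin n)} (hT : T ∈ FF hn) :
    ∃ p : Finset (Fin n), p.card = 2 ∧
      ∀ T' ∈ FF hn, T' ≠ T → ∀ x y : Fin n, x ≠ y →
        x ∈ T → y ∈ T → x ∈ T' → y ∈ T' → x ∈ p ∧ y ∈ p := by
  obtain ⟨⟨a, c⟩, hac, rfl⟩ := Finset.mem_image.mp hT
  rw [mem_idx] at hac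
  obtain ⟨he, h1, h2⟩ := hac
  refine ⟨{g hn a, g hn (a + 1)}, ?_, ?_⟩
  · rw [Finset.card_insert_of_notMem, Finset.card_singleton]
    simp only [Finset.mem_singleton, Fin.ext_iff, g_val hn (by omega : a < n),
      g_val hn (by omega : a + 1 < n)]
    omega
  · rintro T' hT' hne x y hxy hx hy hx' hy'
    obtain ⟨⟨a', c'⟩, hac', rfl⟩ := Finset.mem_image.mp hT'
    rw [mem_idx] at hac'
    obtain ⟨he', h1', h2'⟩ := hac'
    simp only at he' h1' h2'
    have hxT := (mem_triple_iff hn h1 h2 x).mp hx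
    have hyT := (mem_triple_iff hn h1 h2 y).mp hy
    have hxT' := (mem_triple_iff hn h1' h2' x).mp hx'
    have hyT' := (mem_triple_iff hn h1' h2' y).mp hy'
    have hvne : x.val ≠ y.val := fun h => hxy (Fin.ext h)
    have hdiff : ¬ (a = a' ∧ c = c') := by
      rintro ⟨rfl, rfl⟩; exact hne rfl
    have hgoal : (x.val = a ∨ x.val = a + 1) ∧ (y.val = a ∨ y.val = a + 1) := by omega
    constructor
    · rcases hgoal.1 with h | h <;>
        simp [Finset.mem_insert, Fin.ext_iff, g_val hn (by omega : a < n),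
          g_val hn (by omega : a + 1 < n), h]
    · rcases hgoal.2 with h | h <;>
        simp [Finset.mem_insert, Fin.ext_iff, g_val hn (by omega : a < n),
          g_val hn (by omega : a + 1 < n), h]


lemma FF_Cfree (hn : 0 < n) : ¬ containsConfig (FF hn) configC := by
  rintro ⟨f, hf, hpat⟩
  have hA : ({f 0, f 1, f 3} : Finset (Fin n)) ∈ FF hn := by
    have := hpat {0, 1, 3} (by simp [configC])
    simpa [Finset.image_insert] using this
  have hB : ({f 0, f 2, f 3} : Finset (Fin n)) ∈ FF hn := by
    have := hpat {0, 2, 3} (by simp [configC])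
    simpa [Finset.image_insert] using this
  have hC2 : ({f 1, f 2, f 3} : Finset (Fin n)) ∈ FF hn := by
    have := hpat {1, 2, 3} (by simp [configC])
    simpa [Finset.image_insert] using this
  have hne : ∀ i j : Fin 4, i ≠ j → f i ≠ f j := fun i j hij h => hij (hf h)
  obtain ⟨p, hp2, hprop⟩ := FF_shared hn hA
  have hBA : ({f 0, f 2, f 3} : Finset (Fin n)) ≠ {f 0, f 1, f 3} := by
    intro h
    have : f 1 ∈ ({f 0, f 2, f 3} : Finset (Fin n)) := by rw [h]; simp
    simp only [Finset.mem_insert, Finset.mem_singleton] at this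
    rcases this with h' | h' | h'
    · exact hne 1 0 (by decide) h'
    · exact hne 1 2 (by decide) h'
    · exact hne 1 3 (by decide) h'
  have hCA : ({f 1, f 2, f 3} : Finset (Fin n)) ≠ {f 0, f 1, f 3} := by
    intro h
    have : f 0 ∈ ({f 1, f 2, f 3} : Finset (Fin n)) := by rw [h]; simp
    simp only [Finset.mem_insert, Finset.mem_singleton] at this
    rcases this with h' | h' | h'
    · exact hne 0 1 (by decide) h'
    · exact hne 0 2 (by decide) h'
    · exact hne 0 3 (by decide) h'
  have k1 := hprop _ hB hBA (f 0) (f 3) (hne 0 3 (by decide)) (by simp) (by simp)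
    (by simp) (by simp)
  have k2 := hprop _ hC2 hCA (f 1) (f 3) (hne 1 3 (by decide)) (by simp) (by simp)
    (by simp) (by simp)
  have hsub : ({f 0, f 1, f 3} : Finset (Fin n)) ⊆ p := by
    intro z hz
    simp only [Finset.mem_insert, Finset.mem_singleton] at hz
    rcases hz with rfl | rfl | rfl
    · exact k1.1
    · exact k2.1
    · exact k1.2
  have hcard : ({f 0, f 1, f 3} : Finset (Fin n)).card = 3 := by
    rw [Finset.card_insert_of_notMem, Finset.card_insert_of_notMem, Finset.card_singleton]
    · simp only [Finset.mem_singleton]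
      exact hne 1 3 (by decide)
    · simp only [Finset.mem_insert, Finset.mem_singleton]
      push_neg
      exact ⟨hne 0 1 (by decide), hne 0 3 (by decide)⟩
  have := Finset.card_le_card hsub
  omega

lemma FF_Dfree (hn : 0 < n) : ¬ containsConfig (FF hn) configD := by
  rintro ⟨f, hf, hpat⟩
  have hA : ({f 0, f 1, f 2} : Finset (Fin n)) ∈ FF hn := by
    have := hpat {0, 1, 2} (by simp [configD])
    simpa [Finset.image_insert] using this
  have hB : ({f 0, f 2, f 3} : Finset (Fin n)) ∈ FF hn := by
    have := hpat {0, 2, 3} (by simp [configD])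
    simpa [Finset.image_insert] using this
  have hC2 : ({f 1, f 2, f 4} : Finset (Fin n)) ∈ FF hn := by
    have := hpat {1, 2, 4} (by simp [configD])
    simpa [Finset.image_insert] using this
  have hne : ∀ i j : Fin 5, i ≠ j → f i ≠ f j := fun i j hij h => hij (hf h)
  obtain ⟨p, hp2, hprop⟩ := FF_shared hn hA
  have hBA : ({f 0, f 2, f 3} : Finset (Fin n)) ≠ {f 0, f 1, f 2} := by
    intro h
    have : f 3 ∈ ({f 0, f 1, f 2} : Finset (Fin n)) := by rw [← h]; simp
    simp only [Finset.mem_insert, Finset.mem_singleton] at this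
    rcases this with h' | h' | h'
    · exact hne 3 0 (by decide) h'
    · exact hne 3 1 (by decide) h'
    · exact hne 3 2 (by decide) h'
  have hCA : ({f 1, f 2, f 4} : Finset (Fin n)) ≠ {f 0, f 1, f 2} := by
    intro h
    have : f 4 ∈ ({f 0, f 1, f 2} : Finset (Fin n)) := by rw [← h]; simp
    simp only [Finset.mem_insert, Finset.mem_singleton] at this
    rcases this with h' | h' | h'
    · exact hne 4 0 (by decide) h'
    · exact hne 4 1 (by decide) h'
    · exact hne 4 2 (by decide) h'
  have k1 := hprop _ hB hBA (f 0) (f 2) (hne 0 2 (by decide)) (by simp) (by simp)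
    (by simp) (by simp)
  have k2 := hprop _ hC2 hCA (f 1) (f 2) (hne 1 2 (by decide)) (by simp) (by simp)
    (by simp) (by simp)
  have hsub : ({f 0, f 1, f 2} : Finset (Fin n)) ⊆ p := by
    intro z hz
    simp only [Finset.mem_insert, Finset.mem_singleton] at hz
    rcases hz with rfl | rfl | rfl
    · exact k1.1
    · exact k2.1
    · exact k1.2
  have hcard : ({f 0, f 1, f 2} : Finset (Fin n)).card = 3 := by
    rw [Finset.card_insert_of_notMem, Finset.card_insert_of_notMem, Finset.card_singleton]
    · simp only [Finset.mem_singleton]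
      exact hne 1 2 (by decide)
    · simp only [Finset.mem_insert, Finset.mem_singleton]
      push_neg
      exact ⟨hne 0 1 (by decide), hne 0 2 (by decide)⟩
  have := Finset.card_le_card hsub
  omega


/-! ### Upper bound -/

variable (F : Finset (Finset (Fin n)))

/-- degree of a pair: number of triples containing it. -/
def deg (p : Finset (Fin n)) : ℕ := (F.filter fun T => p ⊆ T).card

lemma deg_two {T T' p : Finset (Fin n)} (hT : T ∈ F) (hT' : T' ∈ F) (hne : T ≠ T')
    (h1 : p ⊆ T) (h2 : p ⊆ T') : 2 ≤ deg F p := by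
  have : 1 < (F.filter fun T => p ⊆ T).card :=
    Finset.one_lt_card.mpr ⟨T, Finset.mem_filter.mpr ⟨hT, h1⟩,
      T', Finset.mem_filter.mpr ⟨hT', h2⟩, hne⟩
  unfold deg; omega

/-- extract the third element of a triple containing a given pair. -/
lemma third_elt (hTS : isTripleSystem F) {T : Finset (Fin n)} (hT : T ∈ F)
    {a b : Fin n} (hab : a ≠ b) (hsub : ({a, b} : Finset (Fin n)) ⊆ T) :
    ∃ x : Fin n, x ≠ a ∧ x ≠ b ∧ T = insert x {a, b} := by
  have hc3 : T.card = 3 := hTS T hT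
  have hsd : (T \ {a, b}).card = 1 := by
    rw [Finset.card_sdiff_of_subset hsub, hc3, Finset.card_pair hab]
  obtain ⟨x, hx⟩ := Finset.card_eq_one.mp hsd
  have hxmem : x ∈ T \ ({a, b} : Finset (Fin n)) := hx ▸ Finset.mem_singleton_self x
  rw [Finset.mem_sdiff, Finset.mem_insert, Finset.mem_singleton] at hxmem
  push_neg at hxmem
  refine ⟨x, hxmem.2.1, hxmem.2.2, ?_⟩
  have := Finset.sdiff_union_of_subset hsub
  rw [hx] at this
  rw [← this]
  ext z
  simp [Finset.mem_insert, Finset.mem_union]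
  tauto

private lemma inj4 {α : Type*} {v0 v1 v2 v3 : α} (h01 : v0 ≠ v1) (h02 : v0 ≠ v2)
    (h03 : v0 ≠ v3) (h12 : v1 ≠ v2) (h13 : v1 ≠ v3) (h23 : v2 ≠ v3) :
    Function.Injective ![v0, v1, v2, v3] := by
  intro i j hij
  fin_cases i <;> fin_cases j <;> simp_all

private lemma inj5 {α : Type*} {v0 v1 v2 v3 v4 : α} (h01 : v0 ≠ v1) (h02 : v0 ≠ v2)
    (h03 : v0 ≠ v3) (h04 : v0 ≠ v4) (h12 : v1 ≠ v2) (h13 : v1 ≠ v3) (h14 : v1 ≠ v4)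
    (h23 : v2 ≠ v3) (h24 : v2 ≠ v4) (h34 : v3 ≠ v4) :
    Function.Injective ![v0, v1, v2, v3, v4] := by
  intro i j hij
  fin_cases i <;> fin_cases j <;> simp_all

lemma helper (hTS : isTripleSystem F) (hC : ¬ containsConfig F configC)
    (hD : ¬ containsConfig F configD) {a b c : Fin n}
    (hab : a ≠ b) (hac : a ≠ c) (hbc : b ≠ c)
    (hT : ({a, b, c} : Finset (Fin n)) ∈ F)
    (h1 : 2 ≤ deg F {a, b}) (h2 : 2 ≤ deg F {a, c}) : False := by
  -- get a second triple through {a,b}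
  have hT1 : ∃ T1 ∈ F, ({a, b} : Finset (Fin n)) ⊆ T1 ∧ T1 ≠ {a, b, c} := by
    have hlt : 1 < (F.filter fun T => ({a, b} : Finset (Fin n)) ⊆ T).card := by
      unfold deg at h1; omega
    obtain ⟨T1, hT1, hne⟩ := Finset.exists_mem_ne hlt {a, b, c}
    rw [Finset.mem_filter] at hT1
    exact ⟨T1, hT1.1, hT1.2, hne⟩
  obtain ⟨T1, hT1F, hT1sub, hT1ne⟩ := hT1
  obtain ⟨x, hxa, hxb, hT1eq⟩ := third_elt F hTS hT1F hab hT1sub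
  have hxc : x ≠ c := by
    rintro rfl
    apply hT1ne
    rw [hT1eq]
    ext z; simp [Finset.mem_insert]; tauto
  have hT2 : ∃ T2 ∈ F, ({a, c} : Finset (Fin n)) ⊆ T2 ∧ T2 ≠ {a, b, c} := by
    have hlt : 1 < (F.filter fun T => ({a, c} : Finset (Fin n)) ⊆ T).card := by
      unfold deg at h2; omega
    obtain ⟨T2, hT2, hne⟩ := Finset.exists_mem_ne hlt {a, b, c}
    rw [Finset.mem_filter] at hT2
    exact ⟨T2, hT2.1, hT2.2, hne⟩
  obtain ⟨T2, hT2F, hT2sub, hT2ne⟩ := hT2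
  obtain ⟨y, hya, hyc, hT2eq⟩ := third_elt F hTS hT2F hac hT2sub
  have hyb : y ≠ b := by
    rintro rfl
    apply hT2ne
    rw [hT2eq]
    ext z; simp [Finset.mem_insert]; tauto
  have hT1F' : (insert x {a, b} : Finset (Fin n)) ∈ F := hT1eq ▸ hT1F
  have hT2F' : (insert y {a, c} : Finset (Fin n)) ∈ F := hT2eq ▸ hT2F
  by_cases hxy : x = y
  · -- configuration C with f = ![b, c, x, a]
    subst hxy
    apply hC
    refine ⟨![b, c, x, a], ?_, ?_⟩
    · exact inj4 hbc (fun h => hxb h.symm) (fun h => hab h.symm) (fun h => hxc h.symm)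
        (fun h => hac h.symm) hxa
    · intro t ht
      simp only [configC, List.mem_cons, List.not_mem_nil, or_false] at ht
      rcases ht with rfl | rfl | rfl
      · have himg : ({0, 1, 3} : Finset (Fin 4)).image ![b, c, x, a] = {b, c, a} := by
          simp [Finset.image_insert]
        rw [himg]
        have : ({b, c, a} : Finset (Fin n)) = {a, b, c} := by
          ext z; simp [Finset.mem_insert]; tauto
        rw [this]; exact hT
      · have himg : ({0, 2, 3} : Finset (Fin 4)).image ![b, c, x, a] = {b, x, a} := by
          simp [Finset.image_insert]
        rw [himg]
        have : ({b, x, a} : Finset (Fin n)) = insert x {a, b} := by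
          ext z; simp [Finset.mem_insert]; tauto
        rw [this]; exact hT1F'
      · have himg : ({1, 2, 3} : Finset (Fin 4)).image ![b, c, x, a] = {c, x, a} := by
          simp [Finset.image_insert]
        rw [himg]
        have : ({c, x, a} : Finset (Fin n)) = insert x {a, c} := by
          ext z; simp [Finset.mem_insert]; tauto
        rw [this]; exact hT2F'
  · -- configuration D with f = ![b, c, a, x, y]
    apply hD
    refine ⟨![b, c, a, x, y], ?_, ?_⟩
    · exact inj5 hbc (fun h => hab h.symm) (fun h => hxb h.symm) (fun h => hyb h.symm)
        (fun h => hac h.symm) (fun h => hxc h.symm) (fun h => hyc h.symm)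
        hxa.symm hya.symm hxy
    · intro t ht
      simp only [configD, List.mem_cons, List.not_mem_nil, or_false] at ht
      rcases ht with rfl | rfl | rfl
      · have himg : ({0, 1, 2} : Finset (Fin 5)).image ![b, c, a, x, y] = {b, c, a} := by
          simp [Finset.image_insert]
        rw [himg]
        have : ({b, c, a} : Finset (Fin n)) = {a, b, c} := by
          ext z; simp [Finset.mem_insert]; tauto
        rw [this]; exact hT
      · have himg : ({0, 2, 3} : Finset (Fin 5)).image ![b, c, a, x, y] = {b, a, x} := by
          simp [Finset.image_insert]
        rw [himg]
        have : ({b, a, x} : Finset (Fin n)) = insert x {a, b} := by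
          ext z; simp [Finset.mem_insert]; tauto
        rw [this]; exact hT1F'
      · have himg : ({1, 2, 4} : Finset (Fin 5)).image ![b, c, a, x, y] = {c, a, y} := by
          simp [Finset.image_insert]
        rw [himg]
        have : ({c, a, y} : Finset (Fin n)) = insert y {a, c} := by
          ext z; simp [Finset.mem_insert]; tauto
        rw [this]; exact hT2F'


/-- each triple contains at most one pair of degree ≥ 2. -/
lemma unique_mp (hTS : isTripleSystem F) (hC : ¬ containsConfig F configC)
    (hD : ¬ containsConfig F configD) {T p q : Finset (Fin n)} (hT : T ∈ F)
    (hp : p ⊆ T) (hq : q ⊆ T) (hp2 : p.card = 2) (hq2 : q.card = 2)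
    (hpd : 2 ≤ deg F p) (hqd : 2 ≤ deg F q) : p = q := by
  by_contra hne
  -- p and q intersect
  have hint : (p ∩ q).Nonempty := by
    rw [Finset.nonempty_iff_ne_empty]
    intro hemp
    have hdisj : Disjoint p q := Finset.disjoint_iff_inter_eq_empty.mpr hemp
    have h4 : (p ∪ q).card = 4 := by rw [Finset.card_union_of_disjoint hdisj, hp2, hq2]
    have := Finset.card_le_card (Finset.union_subset hp hq)
    rw [h4, hTS T hT] at this
    omega
  obtain ⟨a, ha⟩ := hint
  rw [Finset.mem_inter] at ha
  -- p = {a, b}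
  have hpb : ∃ b, b ≠ a ∧ p = {a, b} := by
    have h1 : (p.erase a).card = 1 := by rw [Finset.card_erase_of_mem ha.1, hp2]
    obtain ⟨b, hb⟩ := Finset.card_eq_one.mp h1
    have hbne : b ≠ a := by
      have : b ∈ p.erase a := hb ▸ Finset.mem_singleton_self b
      exact (Finset.mem_erase.mp this).1
    refine ⟨b, hbne, ?_⟩
    rw [← Finset.insert_erase ha.1, hb]
  obtain ⟨b, hba, hpeq⟩ := hpb
  have hqb : ∃ c, c ≠ a ∧ q = {a, c} := by
    have h1 : (q.erase a).card = 1 := by rw [Finset.card_erase_of_mem ha.2, hq2]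
    obtain ⟨c, hc⟩ := Finset.card_eq_one.mp h1
    have hcne : c ≠ a := by
      have : c ∈ q.erase a := hc ▸ Finset.mem_singleton_self c
      exact (Finset.mem_erase.mp this).1
    refine ⟨c, hcne, ?_⟩
    rw [← Finset.insert_erase ha.2, hc]
  obtain ⟨c, hca, hqeq⟩ := hqb
  have hbc : b ≠ c := by
    rintro rfl
    exact hne (hpeq.trans hqeq.symm)
  -- T = {a, b, c}
  have habc : ({a, b, c} : Finset (Fin n)) ⊆ T := by
    intro z hz
    simp only [Finset.mem_insert, Finset.mem_singleton] at hz
    rcases hz with rfl | rfl | rfl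
    · exact hp ha.1
    · exact hp (hpeq ▸ by simp)
    · exact hq (hqeq ▸ by simp)
  have hcard : ({a, b, c} : Finset (Fin n)).card = 3 := by
    rw [Finset.card_insert_of_notMem, Finset.card_insert_of_notMem, Finset.card_singleton]
    · simpa using hbc
    · simp only [Finset.mem_insert, Finset.mem_singleton]
      push_neg
      exact ⟨fun h => hba h.symm, fun h => hca h.symm⟩
  have hTeq : ({a, b, c} : Finset (Fin n)) = T :=
    Finset.eq_of_subset_of_card_le habc (le_of_eq ((hTS T hT).trans hcard.symm))
  apply helper F hTS hC hD (fun h => hba h.symm) (fun h => hca h.symm) hbc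
    (hTeq ▸ hT) (hpeq ▸ hpd) (hqeq ▸ hqd)

open Classical in
/-- the core of a triple: its unique multipair if it has one, else an arbitrary pair. -/
noncomputable def core (T : Finset (Fin n)) : Finset (Fin n) :=
  if h : ∃ p, p ∈ (T.powersetCard 2).filter fun p => 2 ≤ deg F p then h.choose
  else if h2 : ∃ p, p ∈ T.powersetCard 2 then h2.choose
  else ∅

lemma core_mem (hTS : isTripleSystem F) {T : Finset (Fin n)} (hT : T ∈ F) :
    core F T ⊆ T ∧ (core F T).card = 2 := by
  have hne : ∃ p, p ∈ T.powersetCard 2 := by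
    have hcard : (T.powersetCard 2).card = 3 := by
      rw [Finset.card_powersetCard, hTS T hT]
      decide
    have : (T.powersetCard 2).Nonempty := Finset.card_pos.mp (by omega)
    exact this
  unfold core
  split
  · next h =>
    have := h.choose_spec
    rw [Finset.mem_filter, Finset.mem_powersetCard] at this
    exact this.1
  · next h =>
    have := hne.choose_spec
    rw [Finset.mem_powersetCard] at this
    exact this

lemma mp_eq_core (hTS : isTripleSystem F) (hC : ¬ containsConfig F configC)
    (hD : ¬ containsConfig F configD) {T p : Finset (Fin n)} (hT : T ∈ F)
    (hp : p ⊆ T) (hp2 : p.card = 2) (hpd : 2 ≤ deg F p) : p = core F T := by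
  have hpool : ∃ q, q ∈ (T.powersetCard 2).filter fun q => 2 ≤ deg F q :=
    ⟨p, Finset.mem_filter.mpr ⟨Finset.mem_powersetCard.mpr ⟨hp, hp2⟩, hpd⟩⟩
  unfold core
  rw [dif_pos hpool]
  have hspec := hpool.choose_spec
  rw [Finset.mem_filter, Finset.mem_powersetCard] at hspec
  exact unique_mp F hTS hC hD hT hp hspec.1.1 hp2 hspec.1.2 hpd hspec.2

/-- the petal part of a triple. -/
noncomputable def petS (T : Finset (Fin n)) : Finset (Fin n) := T \ core F T

lemma petS_card (hTS : isTripleSystem F) {T : Finset (Fin n)} (hT : T ∈ F) :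
    (petS F T).card = 1 := by
  rw [petS, Finset.card_sdiff_of_subset (core_mem F hTS hT).1, hTS T hT, (core_mem F hTS hT).2]

/-- the key rigidity lemma: a petal-core incidence spanning two triples forces them equal. -/
lemma arrow_rigid (hTS : isTripleSystem F) (hC : ¬ containsConfig F configC)
    (hD : ¬ containsConfig F configD) {T T' : Finset (Fin n)} (hT : T ∈ F) (hT' : T' ∈ F)
    {x y : Fin n} (hx : x ∈ petS F T) (hy : y ∈ core F T)
    (hx' : x ∈ T') (hy' : y ∈ T') : T = T' := by
  by_contra hne
  rw [petS, Finset.mem_sdiff] at hx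
  have hxy : x ≠ y := fun h => hx.2 (h ▸ hy)
  have hsub : ({x, y} : Finset (Fin n)) ⊆ T := by
    intro z hz
    simp only [Finset.mem_insert, Finset.mem_singleton] at hz
    rcases hz with rfl | rfl
    · exact hx.1
    · exact (core_mem F hTS hT).1 hy
  have hsub' : ({x, y} : Finset (Fin n)) ⊆ T' := by
    intro z hz
    simp only [Finset.mem_insert, Finset.mem_singleton] at hz
    rcases hz with rfl | rfl
    · exact hx'
    · exact hy'
  have hdeg : 2 ≤ deg F {x, y} := deg_two F hT hT' hne hsub hsub'
  have := mp_eq_core F hTS hC hD hT hsub (Finset.card_pair hxy) hdeg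
  exact hx.2 (this ▸ Finset.mem_insert_self x {y})


/-- the arrow set: (petal, core-vertex) pairs over all triples. -/
noncomputable def arrows : Finset (Fin n × Fin n) :=
  F.biUnion fun T => (petS F T) ×ˢ (core F T)

lemma mem_arrows {q : Fin n × Fin n} :
    q ∈ arrows F ↔ ∃ T ∈ F, q.1 ∈ petS F T ∧ q.2 ∈ core F T := by
  obtain ⟨x, y⟩ := q
  simp [arrows, Finset.mem_biUnion, Finset.mem_product]

lemma card_arrows (hTS : isTripleSystem F) (hC : ¬ containsConfig F configC)
    (hD : ¬ containsConfig F configD) : (arrows F).card = 2 * F.card := by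
  rw [arrows, Finset.card_biUnion]
  · rw [Finset.sum_congr rfl (fun T hT => ?_), Finset.sum_const, smul_eq_mul, mul_comm]
    rw [Finset.card_product, petS_card F hTS hT, (core_mem F hTS hT).2]
  · intro T hT T' hT' hne
    rw [Function.onFun, Finset.disjoint_left]
    rintro ⟨x, y⟩ hq hq'
    rw [Finset.mem_product] at hq hq'
    exact hne (arrow_rigid F hTS hC hD hT hT' hq.1 hq.2
      (Finset.sdiff_subset hq'.1) ((core_mem F hTS hT').1 hq'.2))

lemma arrows_antisym (hTS : isTripleSystem F) (hC : ¬ containsConfig F configC)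
    (hD : ¬ containsConfig F configD) {x y : Fin n}
    (h1 : (x, y) ∈ arrows F) (h2 : (y, x) ∈ arrows F) : False := by
  obtain ⟨T, hT, hx, hy⟩ := (mem_arrows F).mp h1
  obtain ⟨T', hT', hy', hx'⟩ := (mem_arrows F).mp h2
  simp only at hx hy hx' hy'
  have hTT : T = T' := arrow_rigid F hTS hC hD hT hT' hx hy
    ((core_mem F hTS hT').1 hx') (Finset.sdiff_subset hy')
  subst hTT
  rw [petS, Finset.mem_sdiff] at hy'
  exact hy'.2 hy

lemma arrows_ne {x y : Fin n} (h : (x, y) ∈ arrows F) : x ≠ y := by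
  obtain ⟨T, hT, hx, hy⟩ := (mem_arrows F).mp h
  simp only at hx hy
  rw [petS, Finset.mem_sdiff] at hx
  exact fun he => hx.2 (he ▸ hy)

lemma arrows_not_core (hTS : isTripleSystem F) (hC : ¬ containsConfig F configC)
    (hD : ¬ containsConfig F configD) {x y : Fin n}
    (h : (x, y) ∈ arrows F) {T'' : Finset (Fin n)} (hT'' : T'' ∈ F) :
    core F T'' ≠ {x, y} := by
  intro hcore
  obtain ⟨T, hT, hx, hy⟩ := (mem_arrows F).mp h
  simp only at hx hy
  have hxT'' : x ∈ T'' := (core_mem F hTS hT'').1 (hcore ▸ Finset.mem_insert_self x {y})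
  have hyT'' : y ∈ T'' := (core_mem F hTS hT'').1 (hcore ▸ by simp)
  have hTT : T = T'' := arrow_rigid F hTS hC hD hT hT'' hx hy hxT'' hyT''
  subst hTT
  rw [petS, Finset.mem_sdiff] at hx
  exact hx.2 (hcore ▸ Finset.mem_insert_self x {y})

lemma two_mul_choose_two (a : ℕ) : 2 * a.choose 2 = a * (a - 1) := by
  rcases a with _ | j
  · rfl
  · rw [Nat.choose_two_right]
    have hev : Even ((j + 1) * j) := by rw [mul_comm]; exact Nat.even_mul_succ_self j
    have h2 := Nat.even_iff.mp hev
    simp only [Nat.add_sub_cancel]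
    set u := (j + 1) * j with hu
    omega

lemma keyarith (a b : ℕ) (hba : b ≤ a) :
    b * (b - 1) + 2 * ((a - b) * b) ≤ (a - 1) ^ 2 + b := by
  rcases Nat.eq_zero_or_pos b with rfl | hb
  · simp
  obtain ⟨j, rfl⟩ := Nat.exists_eq_add_of_le hb
  obtain ⟨s, rfl⟩ := Nat.exists_eq_add_of_le hba
  have e1 : 1 + j - 1 = j := by omega
  have e2 : 1 + j + s - (1 + j) = s := by omega
  have e3 : 1 + j + s - 1 = j + s := by omega
  rw [e1, e2, e3]
  have hs : 2 * s ≤ s ^ 2 + 1 := by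
    rcases Nat.eq_zero_or_pos s with rfl | hsp
    · simp
    · obtain ⟨t, rfl⟩ := Nat.exists_eq_add_of_le hsp
      nlinarith
  nlinarith [hs]

theorem upper_bound (hTS : isTripleSystem F) (hC : ¬ containsConfig F configC)
    (hD : ¬ containsConfig F configD) : F.card ≤ (n - 1) ^ 2 / 4 := by
  classical
  set K := F.biUnion (core F) with hK
  set k := K.card with hkdef
  set Pi := F.image (core F) with hPi
  set m := Pi.card with hmdef
  have hKsub : ∀ T ∈ F, core F T ⊆ K := fun T hT => Finset.subset_biUnion_of_mem _ hT
  have hPisub : Pi ⊆ K.powersetCard 2 := by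
    intro p hp
    obtain ⟨T, hT, rfl⟩ := Finset.mem_image.mp hp
    exact Finset.mem_powersetCard.mpr ⟨hKsub T hT, (core_mem F hTS hT).2⟩
  have hk2m : k ≤ 2 * m := by
    have hsub : K ⊆ Pi.biUnion id := by
      intro x hx
      obtain ⟨T, hT, hxT⟩ := Finset.mem_biUnion.mp hx
      exact Finset.mem_biUnion.mpr ⟨core F T, Finset.mem_image_of_mem _ hT, hxT⟩
    calc k ≤ (Pi.biUnion id).card := Finset.card_le_card hsub
      _ ≤ ∑ p ∈ Pi, (id p).card := Finset.card_biUnion_le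
      _ ≤ ∑ _p ∈ Pi, 2 := Finset.sum_le_sum (fun p hp => by
          obtain ⟨T, hT, rfl⟩ := Finset.mem_image.mp hp
          exact le_of_eq (core_mem F hTS hT).2)
      _ = 2 * m := by rw [Finset.sum_const, smul_eq_mul, mul_comm]
  have hkn : k ≤ n := by
    calc k ≤ Finset.univ.card := Finset.card_le_univ K
      _ = n := by rw [Finset.card_univ, Fintype.card_fin]
  set A1 := (arrows F).filter (fun q => q.1 ∈ K) with hA1def
  set A2 := (arrows F).filter (fun q => ¬ q.1 ∈ K) with hA2def
  have hsplit : A1.card + A2.card = (arrows F).card :=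
    Finset.card_filter_add_card_filter_not _
  have hA2 : A2.card ≤ (n - k) * k := by
    have hsub : A2 ⊆ (Finset.univ \ K) ×ˢ K := by
      rintro ⟨x, y⟩ hq
      rw [hA2def, Finset.mem_filter] at hq
      obtain ⟨T, hT, hxT, hyT⟩ := (mem_arrows F).mp hq.1
      simp only at hxT hyT
      rw [Finset.mem_product]
      exact ⟨Finset.mem_sdiff.mpr ⟨Finset.mem_univ _, hq.2⟩, hKsub T hT hyT⟩
    calc A2.card ≤ ((Finset.univ \ K) ×ˢ K).card := Finset.card_le_card hsub
      _ = (n - k) * k := by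
          rw [Finset.card_product, Finset.card_sdiff_of_subset (Finset.subset_univ K),
            Finset.card_univ, Fintype.card_fin]
  have hA1 : A1.card + m ≤ k.choose 2 := by
    have hinj : Set.InjOn (fun q : Fin n × Fin n => ({q.1, q.2} : Finset (Fin n))) A1 := by
      rintro ⟨x, y⟩ hq ⟨x', y'⟩ hq' heq
      rw [hA1def] at hq hq'
      simp only [Finset.mem_coe, Finset.mem_filter] at hq hq'
      simp only at heq
      have hxy := arrows_ne F hq.1
      have hxy' := arrows_ne F hq'.1
      have hx' : x' ∈ ({x, y} : Finset (Fin n)) := heq ▸ Finset.mem_insert_self x' {y'}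
      have hy' : y' ∈ ({x, y} : Finset (Fin n)) := heq ▸ by simp
      simp only [Finset.mem_insert, Finset.mem_singleton] at hx' hy'
      rcases hx' with rfl | rfl
      · rcases hy' with rfl | rfl
        · simp_all
        · rfl
      · rcases hy' with rfl | rfl
        · exact (arrows_antisym F hTS hC hD hq.1 hq'.1).elim
        · simp_all
    have himg : A1.image (fun q : Fin n × Fin n => ({q.1, q.2} : Finset (Fin n)))
        ⊆ (K.powersetCard 2) \ Pi := by
      intro p hp
      obtain ⟨⟨x, y⟩, hq, rfl⟩ := Finset.mem_image.mp hp
      rw [hA1def, Finset.mem_filter] at hq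
      obtain ⟨T, hT, hxT, hyT⟩ := (mem_arrows F).mp hq.1
      simp only at hxT hyT
      rw [Finset.mem_sdiff]
      constructor
      · refine Finset.mem_powersetCard.mpr ⟨?_, Finset.card_pair (arrows_ne F hq.1)⟩
        intro z hz
        simp only [Finset.mem_insert, Finset.mem_singleton] at hz
        rcases hz with rfl | rfl
        · exact hq.2
        · exact hKsub T hT hyT
      · intro hmem
        rw [hPi] at hmem
        obtain ⟨T'', hT'', hcore⟩ := Finset.mem_image.mp hmem
        exact arrows_not_core F hTS hC hD hq.1 hT'' hcore
    have h1 : A1.card = (A1.image (fun q : Fin n × Fin n =>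
        ({q.1, q.2} : Finset (Fin n)))).card := (Finset.card_image_of_injOn hinj).symm
    have h2 := Finset.card_le_card himg
    have h3 : ((K.powersetCard 2) \ Pi).card = (K.powersetCard 2).card - m :=
      Finset.card_sdiff_of_subset hPisub
    have h4 : (K.powersetCard 2).card = k.choose 2 := by rw [Finset.card_powersetCard]
    have h5 : m ≤ (K.powersetCard 2).card := Finset.card_le_card hPisub
    omega
  have harr : (arrows F).card = 2 * F.card := card_arrows F hTS hC hD
  rw [Nat.le_div_iff_mul_le (by norm_num : (0:ℕ) < 4)]
  have hchoose : 2 * k.choose 2 = k * (k - 1) := two_mul_choose_two k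
  have hkey : k * (k - 1) + 2 * ((n - k) * k) ≤ (n - 1) ^ 2 + k := keyarith n k hkn
  linarith [hsplit, harr, hA1, hA2, hchoose, hkey, hk2m]

end ExCDProof

/-- ex(n, CD) = ((n-1)^2)/4 (floor) for every positive integer n. -/
theorem ex_CD (n : ℕ) (hn : 0 < n) :
    IsGreatest {k : ℕ | ∃ F : Finset (Finset (Fin n)), isTripleSystem F ∧
        ¬ containsConfig F configC ∧ ¬ containsConfig F configD ∧ F.card = k}
      ((n - 1) ^ 2 / 4) := by
  constructor
  · exact ⟨ExCDProof.FF hn, ExCDProof.FF_triples hn, ExCDProof.FF_Cfree hn,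
      ExCDProof.FF_Dfree hn, ExCDProof.card_FF hn⟩
  · rintro k ⟨F, hTS, hC, hD, rfl⟩
    exact ExCDProof.upper_bound F hTS hC hD
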